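/- Let X, Y be regular sequentially compact sequential topological spaces and G a sequentially compact sequential topological group, with σ : Y × X → G continuous. Then the Rees product [X,G,Y]_σ with the product topology is a regular, sequential, countably compact topological semigroup. -/

import Mathlib

open Filter Topology Set

/-- The sandwich multiplication of the Rees product `[X,G,Y]_σ`. -/
def reesMul {X Y G : Type*} [Group G] (σ : Y × X → G)
    (a b : X × G × Y) : X × G × Y :=
  (a.1, a.2.1 * σ (a.2.2, b.1) * b.2.1, b.2.2)

/-- A set is open in a sequential space if every sequence converging to a point of it is
eventually in it. -/
lemma aux_isOpen_of_seq {A : Type*} [TopologicalSpace A] [SequentialSpace A] {V : Set A}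
    (h : ∀ (x : ℕ → A) (p : A), Tendsto x atTop (𝓝 p) → p ∈ V → ∀ᶠ n in atTop, x n ∈ V) :
    IsOpen V := by
  rw [← isClosed_compl_iff]
  apply IsSeqClosed.isClosed
  intro x p hmem htend
  by_contra hp
  have hp' : p ∈ V := by simpa using hp
  obtain ⟨n, hn⟩ := (h x p htend hp').exists
  exact hmem n hn

/-- Every sequence in a product of two sequentially compact spaces has a convergent
subsequence. -/
lemma aux_prod_subseq {A B : Type*} [TopologicalSpace A] [TopologicalSpace B]
    [SeqCompactSpace A] [SeqCompactSpace B] (u : ℕ → A × B) :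
    ∃ p : A × B, ∃ φ : ℕ → ℕ, StrictMono φ ∧ Tendsto (u ∘ φ) atTop (𝓝 p) := by
  obtain ⟨a, φ1, hφ1, ha⟩ := SeqCompactSpace.tendsto_subseq (fun n => (u n).1)
  obtain ⟨b, φ2, hφ2, hb⟩ := SeqCompactSpace.tendsto_subseq (fun n => (u (φ1 n)).2)
  refine ⟨(a, b), φ1 ∘ φ2, hφ1.comp hφ2, ?_⟩
  rw [nhds_prod_eq]
  refine Tendsto.prodMk ?_ ?_
  · exact (ha.comp hφ2.tendsto_atTop)
  · exact hb

instance aux_prod_seqCompact {A B : Type*} [TopologicalSpace A] [TopologicalSpace B]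
    [SeqCompactSpace A] [SeqCompactSpace B] : SeqCompactSpace (A × B) := by
  constructor
  intro u _
  obtain ⟨p, φ, hφ, hp⟩ := aux_prod_subseq u
  exact ⟨p, trivial, φ, hφ, hp⟩

/-- Key lemma (a special case of Boehme's theorem): the product of a sequential space with a
regular, sequentially compact, sequential space is sequential. -/
lemma aux_prod_sequential {A B : Type*} [TopologicalSpace A] [TopologicalSpace B]
    [SequentialSpace A] [RegularSpace B] [SeqCompactSpace B] [SequentialSpace B] :
    SequentialSpace (A × B) := by
  constructor
  intro F hF
  rw [← isOpen_compl_iff]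
  set U := Fᶜ with hU
  -- U is "sequentially open"
  have hUseq : ∀ (z : ℕ → A × B) (p : A × B), Tendsto z atTop (𝓝 p) → p ∈ U →
      ∀ᶠ n in atTop, z n ∈ U := by
    intro z p hz hp
    by_contra hcon
    rw [Filter.not_eventually] at hcon
    obtain ⟨φ, hφ, hmem⟩ := Filter.extraction_of_frequently_atTop
      (hcon.mono (fun n hn => by simpa [U] using hn))
    have : p ∈ F := hF hmem (hz.comp hφ.tendsto_atTop)
    exact hp this
  rw [isOpen_iff_mem_nhds]
  rintro ⟨a, b⟩ hab
  -- W = slice of U at a, is sequentially open, hence open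
  set W : Set B := {y : B | (a, y) ∈ U} with hWdef
  have hWopen : IsOpen W := by
    apply aux_isOpen_of_seq
    intro y p hy hp
    have : Tendsto (fun n => ((a : A), y n)) atTop (𝓝 (a, p)) := by
      rw [nhds_prod_eq]
      exact Tendsto.prodMk tendsto_const_nhds hy
    exact hUseq _ _ this hp
  have hbW : b ∈ W := hab
  -- choose a closed neighborhood K of b inside W
  obtain ⟨K, ⟨hKnhds, hKclosed⟩, hKsub⟩ :=
    (closed_nhds_basis b).mem_iff.mp (hWopen.mem_nhds hbW)
  -- K is sequentially compact
  have hKseq : ∀ y : ℕ → B, (∀ n, y n ∈ K) →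
      ∃ p ∈ K, ∃ φ : ℕ → ℕ, StrictMono φ ∧ Tendsto (y ∘ φ) atTop (𝓝 p) := by
    intro y hy
    obtain ⟨p, φ, hφ, hp⟩ := SeqCompactSpace.tendsto_subseq y
    exact ⟨p, hKclosed.isSeqClosed (fun n => hy (φ n)) hp, φ, hφ, hp⟩
  -- the tube V
  set V : Set A := {x : A | ∀ y ∈ K, (x, y) ∈ U} with hVdef
  have haV : a ∈ V := fun y hy => hKsub hy
  have hVopen : IsOpen V := by
    apply aux_isOpen_of_seq
    intro x p hx hp
    by_contra hcon
    rw [Filter.not_eventually] at hcon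
    have hfreq : ∃ᶠ n in atTop, ∃ y ∈ K, (x n, y) ∉ U := by
      refine hcon.mono (fun n hn => ?_)
      simp only [V, Set.mem_setOf_eq] at hn
      push_neg at hn
      exact hn
    obtain ⟨φ, hφ, hmem⟩ := Filter.extraction_of_frequently_atTop hfreq
    choose y hyK hyU using hmem
    obtain ⟨q, hqK, ψ, hψ, hq⟩ := hKseq y hyK
    have htend : Tendsto (fun k => (x (φ (ψ k)), y (ψ k))) atTop (𝓝 (p, q)) := by
      rw [nhds_prod_eq]
      exact Tendsto.prodMk ((hx.comp hφ.tendsto_atTop).comp hψ.tendsto_atTop) hq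
    have hpq : (p, q) ∈ U := hp q hqK
    obtain ⟨k, hk⟩ := (hUseq _ _ htend hpq).exists
    exact hyU (ψ k) hk
  -- conclude
  have : V ×ˢ interior K ⊆ U := by
    rintro ⟨x, y⟩ ⟨hxV, hyK⟩
    exact hxV y (interior_subset hyK)
  exact Filter.mem_of_superset
    (prod_mem_nhds (hVopen.mem_nhds haV) (isOpen_interior.mem_nhds (mem_interior_iff_mem_nhds.mpr hKnhds))) this

/-- Let `X`, `Y` be regular, sequentially compact, sequential spaces and `G`
a sequentially compact, sequential topological group, with `σ : Y × X → G`
continuous.  Then the Rees product `[X,G,Y]_σ` with the product topology is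
a regular, sequential, countably compact topological semigroup. -/
theorem reesProd_regular_sequential_countablyCompact
    {X Y G : Type*} [TopologicalSpace X] [TopologicalSpace Y]
    [TopologicalSpace G] [Group G] [IsTopologicalGroup G]
    [RegularSpace X] [SeqCompactSpace X] [SequentialSpace X]
    [RegularSpace Y] [SeqCompactSpace Y] [SequentialSpace Y]
    [SeqCompactSpace G] [SequentialSpace G]
    (σ : Y × X → G) (hσ : Continuous σ) :
    RegularSpace (X × G × Y) ∧ SequentialSpace (X × G × Y) ∧
      (∀ u : ℕ → X × G × Y, ∃ a : X × G × Y, MapClusterPt a Filter.atTop u) ∧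
      Continuous (fun q : (X × G × Y) × (X × G × Y) => reesMul σ q.1 q.2) := by
  have hGY : SequentialSpace (G × Y) := aux_prod_sequential
  have hXGY : SequentialSpace (X × G × Y) := aux_prod_sequential
  refine ⟨inferInstance, hXGY, ?_, ?_⟩
  · intro u
    obtain ⟨p, φ, hφ, hp⟩ := aux_prod_subseq u
    exact ⟨p, MapClusterPt.of_comp hφ.tendsto_atTop hp.mapClusterPt⟩
  · unfold reesMul
    fun_prop

-- the multiplication is defined above; `reesMul` continuity proved via fun_prop
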